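/- For the m × m grid graph C_m² (n = m² vertices, 2m(m-1) edges), there exists a random spanning tree 𝒯 such that for every fixed spanning tree t of C_m², E|𝒯 \ t| ≥ a_n where a_n := (n-1) - 4(n^{1/2} - 1) - (n-1)²/(2n). Consequently, for every spanning tree t of C_m² there exists a spanning tree t* with |t* \ t| ≥ a_n; note a_n / n → 1/2 as n → ∞. -/

import Mathlib

open SimpleGraph Finset

/-- The `m × m` grid graph `C_m²`: vertices `{1,…,m}²`, edges between vertices at
Euclidean distance `1`. -/
def grid (m : ℕ) : SimpleGraph (Fin m × Fin m) where
  Adj v w := (v.1 = w.1 ∧ (v.2.1 + 1 = w.2.1 ∨ w.2.1 + 1 = v.2.1)) ∨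
             (v.2 = w.2 ∧ (v.1.1 + 1 = w.1.1 ∨ w.1.1 + 1 = v.1.1))
  symm := by
    constructor; rintro v w (⟨h1, h2⟩ | ⟨h1, h2⟩)
    · exact Or.inl ⟨h1.symm, h2.symm⟩
    · exact Or.inr ⟨h1.symm, h2.symm⟩
  loopless := ⟨by rintro v (⟨h1, h2⟩ | ⟨h1, h2⟩) <;> omega⟩

/-- `T` (a finite set of edges) is a spanning tree of `G`. -/
def IsST {V : Type*} (G : SimpleGraph V) (T : Finset (Sym2 V)) : Prop :=
  ↑T ⊆ G.edgeSet ∧ (SimpleGraph.fromEdgeSet (↑T : Set (Sym2 V))).IsTree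

/-- `a_n := (n-1) - 4(n^{1/2} - 1) - (n-1)²/(2n)`. -/
noncomputable def aSeq (n : ℕ) : ℝ :=
  ((n : ℝ) - 1) - 4 * (Real.sqrt n - 1) - ((n : ℝ) - 1) ^ 2 / (2 * n)

/-- The "comb" predicate for edges: horizontal edges, or edges whose endpoints lie on
the spine (second coordinate 0). -/
def T1pred (m : ℕ) (e : Sym2 (Fin m × Fin m)) : Prop :=
  (∃ v w : Fin m × Fin m, e = s(v, w) ∧ v.1 = w.1) ∨ (∀ v ∈ e, (Prod.snd v).1 = 0)

open scoped Classical in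
/-- The comb spanning tree of the grid. -/
noncomputable def T1 (m : ℕ) : Finset (Sym2 (Fin m × Fin m)) :=
  (grid m).edgeFinset.filter (T1pred m)

/-- The transposed comb. -/
noncomputable def T2 (m : ℕ) : Finset (Sym2 (Fin m × Fin m)) :=
  (T1 m).image (Sym2.map Prod.swap)

lemma T1pred_mk (m : ℕ) (a b : Fin m × Fin m) :
    T1pred m s(a, b) ↔ (a.1 = b.1 ∨ (a.2.1 = 0 ∧ b.2.1 = 0)) := by
  constructor
  · rintro (⟨x, y, hxy, h1⟩ | h)
    · rcases Sym2.eq_iff.1 hxy.symm with ⟨rfl, rfl⟩ | ⟨rfl, rfl⟩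
      · exact Or.inl h1
      · exact Or.inl h1.symm
    · exact Or.inr ⟨h _ (Sym2.mem_mk_left a b), h _ (Sym2.mem_mk_right a b)⟩
  · rintro (h | ⟨h1, h2⟩)
    · exact Or.inl ⟨a, b, rfl, h⟩
    · refine Or.inr fun v hv => ?_
      rcases Sym2.mem_iff.1 hv with rfl | rfl <;> assumption

lemma mem_T1 (m : ℕ) (a b : Fin m × Fin m) :
    s(a, b) ∈ T1 m ↔ (grid m).Adj a b ∧ (a.1 = b.1 ∨ (a.2.1 = 0 ∧ b.2.1 = 0)) := by
  classical
  rw [T1, Finset.mem_filter, mem_edgeFinset, mem_edgeSet, T1pred_mk]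

lemma swap_invol {α β : Type*} (e : Sym2 (α × β)) :
    Sym2.map Prod.swap (Sym2.map Prod.swap e) = e := by
  induction e using Sym2.ind with
  | _ x y => simp

lemma mem_T2 (m : ℕ) (e : Sym2 (Fin m × Fin m)) :
    e ∈ T2 m ↔ Sym2.map Prod.swap e ∈ T1 m := by
  constructor
  · rw [T2]
    intro h
    obtain ⟨a, ha, rfl⟩ := Finset.mem_image.1 h
    rwa [swap_invol]
  · intro h
    exact Finset.mem_image.2 ⟨_, h, swap_invol e⟩

lemma grid_adj_swap {m : ℕ} {v w : Fin m × Fin m} (h : (grid m).Adj v w) :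
    (grid m).Adj (Prod.swap v) (Prod.swap w) := by
  rcases h with ⟨h1, h2⟩ | ⟨h1, h2⟩
  · exact Or.inr ⟨h1, h2⟩
  · exact Or.inl ⟨h1, h2⟩

lemma mem_T2' (m : ℕ) (a b : Fin m × Fin m) :
    s(a, b) ∈ T2 m ↔ (grid m).Adj a b ∧ (a.2 = b.2 ∨ (a.1.1 = 0 ∧ b.1.1 = 0)) := by
  rw [mem_T2, Sym2.map_pair_eq, mem_T1]
  constructor
  · rintro ⟨h, h2⟩
    refine ⟨by simpa using grid_adj_swap h, by simpa using h2⟩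
  · rintro ⟨h, h2⟩
    exact ⟨grid_adj_swap h, by simpa using h2⟩

lemma T1_subset (m : ℕ) : ↑(T1 m) ⊆ (grid m).edgeSet := by
  classical
  intro e he
  rw [Finset.mem_coe, T1, Finset.mem_filter, mem_edgeFinset] at he
  exact he.1

lemma T2_subset (m : ℕ) : ↑(T2 m) ⊆ (grid m).edgeSet := by
  intro e he
  induction e using Sym2.ind with
  | _ a b =>
    rw [Finset.mem_coe, mem_T2' m a b] at he
    exact he.1

lemma walk_const {V : Type*} {G : SimpleGraph V} (c : V → Prop)
    (hc : ∀ a b, G.Adj a b → (c a ↔ c b)) {x y : V} (p : G.Walk x y) : c x ↔ c y := by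
  induction p with
  | nil => rfl
  | cons h p ih => exact (hc _ _ h).trans ih

lemma T1_connected (m : ℕ) (hm : 2 ≤ m) :
    (fromEdgeSet (↑(T1 m) : Set (Sym2 (Fin m × Fin m)))).Connected := by
  have hz : 0 < m := by omega
  set r : Fin m × Fin m := (⟨0, hz⟩, ⟨0, hz⟩) with hr
  have key : ∀ (k : ℕ) (v : Fin m × Fin m), v.1.1 + v.2.1 ≤ k →
      (fromEdgeSet (↑(T1 m) : Set (Sym2 (Fin m × Fin m)))).Reachable v r := by
    intro k
    induction k with
    | zero =>
      intro v hv
      have : v = r := by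
        rw [hr]
        refine Prod.ext (Fin.ext ?_) (Fin.ext ?_) <;> dsimp only <;>
                (try rw [Nat.mod_eq_of_lt (by omega)]) <;> omega
      rw [this]
    | succ k ih =>
      intro v hv
      rcases Nat.eq_zero_or_pos v.2.1 with h2 | h2
      · rcases Nat.eq_zero_or_pos v.1.1 with h1 | h1
        · have : v = r := by
            rw [hr]
            refine Prod.ext (Fin.ext ?_) (Fin.ext ?_) <;> dsimp only <;>
                (try rw [Nat.mod_eq_of_lt (by omega)]) <;> omega
          rw [this]
        · set u : Fin m × Fin m := (⟨v.1.1 - 1, by omega⟩, v.2) with hu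
          have hadj : (fromEdgeSet (↑(T1 m) : Set (Sym2 (Fin m × Fin m)))).Adj v u := by
            rw [fromEdgeSet_adj]
            refine ⟨Finset.mem_coe.2 ((mem_T1 m v u).2 ⟨?_, ?_⟩), ?_⟩
            · exact Or.inr ⟨rfl, Or.inr (by simp [hu]; omega)⟩
            · exact Or.inr ⟨h2, h2⟩
            · intro h
              have := congrArg (fun p => (Prod.fst p).1) h
              simp [hu] at this
              omega
          exact hadj.reachable.trans (ih u (by simp [hu]; omega))
      · set u : Fin m × Fin m := (v.1, ⟨v.2.1 - 1, by omega⟩) with hu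
        have hadj : (fromEdgeSet (↑(T1 m) : Set (Sym2 (Fin m × Fin m)))).Adj v u := by
          rw [fromEdgeSet_adj]
          refine ⟨Finset.mem_coe.2 ((mem_T1 m v u).2 ⟨?_, ?_⟩), ?_⟩
          · exact Or.inl ⟨rfl, Or.inr (by simp [hu]; omega)⟩
          · exact Or.inl rfl
          · intro h
            have := congrArg (fun p => (Prod.snd p).1) h
            simp [hu] at this
            omega
        exact hadj.reachable.trans (ih u (by simp [hu]; omega))
  haveI : Nonempty (Fin m × Fin m) := ⟨r⟩
  exact ⟨fun a b => (key _ a le_rfl).trans (key _ b le_rfl).symm⟩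

lemma T1_acyclic (m : ℕ) :
    (fromEdgeSet (↑(T1 m) : Set (Sym2 (Fin m × Fin m)))).IsAcyclic := by
  rw [isAcyclic_iff_forall_adj_isBridge]
  intro v w hvw
  have hvw' := hvw
  rw [fromEdgeSet_adj, Finset.mem_coe, mem_T1] at hvw'
  obtain ⟨⟨hadj, hpred⟩, hne⟩ := hvw'
  rw [isBridge_iff]
  suffices h : ∃ c : (Fin m × Fin m) → Prop,
      (∀ a b, ((fromEdgeSet (↑(T1 m) : Set (Sym2 (Fin m × Fin m)))) \
        fromEdgeSet {s(v, w)}).Adj a b → (c a ↔ c b)) ∧ ¬ (c v ↔ c w) by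
    obtain ⟨c, hc, hcvw⟩ := h
    rintro ⟨p⟩
    exact hcvw (walk_const c hc p)
  have edge_info : ∀ a b : Fin m × Fin m,
      ((fromEdgeSet (↑(T1 m) : Set (Sym2 (Fin m × Fin m)))) \
        fromEdgeSet {s(v, w)}).Adj a b →
      (grid m).Adj a b ∧ (a.1 = b.1 ∨ (a.2.1 = 0 ∧ b.2.1 = 0)) ∧ s(a, b) ≠ s(v, w) := by
    intro a b hab
    rw [sdiff_adj, fromEdgeSet_adj, fromEdgeSet_adj, Finset.mem_coe, mem_T1] at hab
    obtain ⟨⟨⟨h1, h2⟩, hne'⟩, h3⟩ := hab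
    exact ⟨h1, h2, fun hh => h3 ⟨by simp [hh], hne'⟩⟩
  rcases hpred with hvw1 | ⟨hv0, hw0⟩
  · -- horizontal edge
    have hor : v.2.1 + 1 = w.2.1 ∨ w.2.1 + 1 = v.2.1 := by
      rcases hadj with ⟨_, h⟩ | ⟨h2, h⟩
      · exact h
      · exact absurd (Prod.ext hvw1 h2) hne
    refine ⟨fun x => x.1 = v.1 ∧ max v.2.1 w.2.1 ≤ x.2.1, ?_, ?_⟩
    · intro a b hab
      obtain ⟨hadj', hpred', hne_e⟩ := edge_info a b hab
      rcases hpred' with hab1 | ⟨ha0, hb0⟩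
      · -- other horizontal edge
        have horab : a.2.1 + 1 = b.2.1 ∨ b.2.1 + 1 = a.2.1 := by
          have hne2 : a ≠ b := hadj'.ne
          rcases hadj' with ⟨_, h⟩ | ⟨h2, h⟩
          · exact h
          · exact absurd (Prod.ext hab1 h2) hne2
        by_cases hfa : a.1 = v.1
        · have hfb : b.1 = v.1 := hab1.symm.trans hfa
          simp only [hfa, hfb, true_and]
          by_contra hcon
          have h2eq : (a.2.1 = v.2.1 ∧ b.2.1 = w.2.1) ∨
              (a.2.1 = w.2.1 ∧ b.2.1 = v.2.1) := by omega
          rcases h2eq with ⟨e1, e2⟩ | ⟨e1, e2⟩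
          · exact hne_e (by
              rw [show a = v from Prod.ext hfa (Fin.ext e1),
                show b = w from Prod.ext (hfb.trans hvw1) (Fin.ext e2)])
          · exact hne_e (by
              rw [show a = w from Prod.ext (hfa.trans hvw1) (Fin.ext e1),
                show b = v from Prod.ext hfb (Fin.ext e2)]
              exact Sym2.eq_swap)
        · have hfb : ¬ b.1 = v.1 := fun h => hfa (hab1.trans h)
          simp [hfa, hfb]
      · -- spine edge elsewhere
        constructor <;> (rintro ⟨_, h⟩; omega)
    · intro hcon
      have h1 : (v.1 = v.1 ∧ max v.2.1 w.2.1 ≤ v.2.1) ↔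
          (w.1 = v.1 ∧ max v.2.1 w.2.1 ≤ w.2.1) := hcon
      simp only [hvw1.symm, true_and] at h1
      omega
  · -- spine edge
    have hver : v.2 = w.2 ∧ (v.1.1 + 1 = w.1.1 ∨ w.1.1 + 1 = v.1.1) := by
      rcases hadj with ⟨h1, h⟩ | h
      · exfalso; omega
      · exact h
    obtain ⟨hv2w2, hor⟩ := hver
    refine ⟨fun x => max v.1.1 w.1.1 ≤ x.1.1, ?_, by simp only []; omega⟩
    intro a b hab
    obtain ⟨hadj', hpred', hne_e⟩ := edge_info a b hab
    rcases hpred' with hab1 | ⟨ha0, hb0⟩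
    · simp only [hab1]
    · have hverab : a.2 = b.2 ∧ (a.1.1 + 1 = b.1.1 ∨ b.1.1 + 1 = a.1.1) := by
        rcases hadj' with ⟨h1, h⟩ | h
        · omega
        · exact h
      obtain ⟨hab2, horab⟩ := hverab
      by_contra hcon
      have h1eq : (a.1.1 = v.1.1 ∧ b.1.1 = w.1.1) ∨
          (a.1.1 = w.1.1 ∧ b.1.1 = v.1.1) := by omega
      have hav2 : a.2 = v.2 := Fin.ext (by omega)
      have hbw2 : b.2 = w.2 := Fin.ext (by
        have := congrArg Fin.val hv2w2
        omega)
      rcases h1eq with ⟨e1, e2⟩ | ⟨e1, e2⟩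
      · exact hne_e (by
          rw [show a = v from Prod.ext (Fin.ext e1) hav2,
            show b = w from Prod.ext (Fin.ext e2) hbw2])
      · exact hne_e (by
          rw [show a = w from Prod.ext (Fin.ext e1) (hav2.trans hv2w2),
            show b = v from Prod.ext (Fin.ext e2) (hbw2.trans hv2w2.symm)]
          exact Sym2.eq_swap)

/-- The swap homomorphism from the comb graph to the transposed comb graph. -/
def swapHom (m : ℕ) : (fromEdgeSet (↑(T1 m) : Set (Sym2 (Fin m × Fin m)))) →g
    (fromEdgeSet (↑(T2 m) : Set (Sym2 (Fin m × Fin m)))) where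
  toFun := Prod.swap
  map_rel' := by
    intro a b hab
    rw [fromEdgeSet_adj] at hab ⊢
    refine ⟨Finset.mem_coe.2 ((mem_T2 m _).2 ?_), fun h => hab.2 (Prod.swap_injective h)⟩
    rw [Sym2.map_pair_eq]
    simpa using Finset.mem_coe.1 hab.1

/-- The swap homomorphism from the transposed comb graph to the comb graph. -/
def swapHom2 (m : ℕ) : (fromEdgeSet (↑(T2 m) : Set (Sym2 (Fin m × Fin m)))) →g
    (fromEdgeSet (↑(T1 m) : Set (Sym2 (Fin m × Fin m)))) where
  toFun := Prod.swap
  map_rel' := by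
    intro a b hab
    rw [fromEdgeSet_adj] at hab ⊢
    refine ⟨Finset.mem_coe.2 ?_, fun h => hab.2 (Prod.swap_injective h)⟩
    have := (mem_T2 m _).1 (Finset.mem_coe.1 hab.1)
    rwa [Sym2.map_pair_eq] at this

lemma T2_connected (m : ℕ) (hm : 2 ≤ m) :
    (fromEdgeSet (↑(T2 m) : Set (Sym2 (Fin m × Fin m)))).Connected :=
  (T1_connected m hm).map (swapHom m) Prod.swap_surjective

lemma T2_acyclic (m : ℕ) :
    (fromEdgeSet (↑(T2 m) : Set (Sym2 (Fin m × Fin m)))).IsAcyclic := by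
  intro a c hc
  exact T1_acyclic m (c.map (swapHom2 m)) (hc.map Prod.swap_injective)

lemma T1_isST (m : ℕ) (hm : 2 ≤ m) : IsST (grid m) (T1 m) :=
  ⟨T1_subset m, ⟨T1_connected m hm, T1_acyclic m⟩⟩

lemma T2_isST (m : ℕ) (hm : 2 ≤ m) : IsST (grid m) (T2 m) :=
  ⟨T2_subset m, ⟨T2_connected m hm, T2_acyclic m⟩⟩

lemma isST_card {m : ℕ} {t : Finset (Sym2 (Fin m × Fin m))} (h : IsST (grid m) t) :
    t.card + 1 = m * m := by
  classical
  have hef : (fromEdgeSet (↑t : Set (Sym2 (Fin m × Fin m)))).edgeFinset = t := by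
    apply Finset.coe_injective
    rw [coe_edgeFinset, edgeSet_fromEdgeSet]
    apply _root_.sdiff_eq_self_iff_disjoint.2
    rw [Set.disjoint_left]
    intro e hdiag het
    exact absurd hdiag ((grid m).not_isDiag_of_mem_edgeSet (h.1 het))
  have h2 := h.2.card_edgeFinset
  rwa [hef, Fintype.card_prod, Fintype.card_fin] at h2

lemma inter_card (m : ℕ) (hm : 2 ≤ m) : (T1 m ∩ T2 m).card ≤ 2 * m := by
  classical
  have hz : 0 < m := by omega
  set f1 : ℕ → Sym2 (Fin m × Fin m) := fun k =>
    s(((⟨0, hz⟩ : Fin m), (⟨k % m, Nat.mod_lt _ hz⟩ : Fin m)),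
      ((⟨0, hz⟩ : Fin m), (⟨(k+1) % m, Nat.mod_lt _ hz⟩ : Fin m))) with hf1
  set f2 : ℕ → Sym2 (Fin m × Fin m) := fun k =>
    s(((⟨k % m, Nat.mod_lt _ hz⟩ : Fin m), (⟨0, hz⟩ : Fin m)),
      ((⟨(k+1) % m, Nat.mod_lt _ hz⟩ : Fin m), (⟨0, hz⟩ : Fin m))) with hf2
  have hsub : T1 m ∩ T2 m ⊆ (Finset.range m).image f1 ∪ (Finset.range m).image f2 := by
    intro e he
    induction e using Sym2.ind with
    | _ a b =>
      rw [Finset.mem_inter, mem_T1, mem_T2'] at he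
      obtain ⟨⟨hadj, hp1⟩, _, hp2⟩ := he
      have ha1 := a.1.2
      have ha2 := a.2.2
      have hb1 := b.1.2
      have hb2 := b.2.2
      rcases hp1 with h11 | ⟨h12a, h12b⟩
      · rcases hp2 with h21 | ⟨h22a, h22b⟩
        · exact absurd (Prod.ext h11 h21) hadj.ne
        · -- row-0 horizontal edge
          have hor : a.2.1 + 1 = b.2.1 ∨ b.2.1 + 1 = a.2.1 := by
            have hne2 : a ≠ b := hadj.ne
            rcases hadj with ⟨_, h⟩ | ⟨h2, h⟩
            · exact h
            · exact absurd (Prod.ext h11 h2) hne2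
          apply Finset.mem_union_left
          rcases hor with h | h
          · refine Finset.mem_image.2 ⟨a.2.1, Finset.mem_range.2 ha2, ?_⟩
            rw [hf1]
            refine Sym2.eq_iff.2 (Or.inl ⟨?_, ?_⟩) <;>
              refine Prod.ext (Fin.ext ?_) (Fin.ext ?_) <;> dsimp only <;>
                (try rw [Nat.mod_eq_of_lt (by omega)]) <;> omega
          · refine Finset.mem_image.2 ⟨b.2.1, Finset.mem_range.2 hb2, ?_⟩
            rw [hf1]
            refine Sym2.eq_iff.2 (Or.inr ⟨?_, ?_⟩) <;>
              refine Prod.ext (Fin.ext ?_) (Fin.ext ?_) <;> dsimp only <;>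
                (try rw [Nat.mod_eq_of_lt (by omega)]) <;> omega
      · rcases hp2 with h21 | ⟨h22a, h22b⟩
        · -- column-0 vertical edge
          have hver : a.1.1 + 1 = b.1.1 ∨ b.1.1 + 1 = a.1.1 := by
            have hne2 : a ≠ b := hadj.ne
            rcases hadj with ⟨h1, h⟩ | ⟨_, h⟩
            · exact absurd (Prod.ext h1 h21) hne2
            · exact h
          apply Finset.mem_union_right
          rcases hver with h | h
          · refine Finset.mem_image.2 ⟨a.1.1, Finset.mem_range.2 ha1, ?_⟩
            rw [hf2]
            refine Sym2.eq_iff.2 (Or.inl ⟨?_, ?_⟩) <;>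
              refine Prod.ext (Fin.ext ?_) (Fin.ext ?_) <;> dsimp only <;>
                (try rw [Nat.mod_eq_of_lt (by omega)]) <;> omega
          · refine Finset.mem_image.2 ⟨b.1.1, Finset.mem_range.2 hb1, ?_⟩
            rw [hf2]
            refine Sym2.eq_iff.2 (Or.inr ⟨?_, ?_⟩) <;>
              refine Prod.ext (Fin.ext ?_) (Fin.ext ?_) <;> dsimp only <;>
                (try rw [Nat.mod_eq_of_lt (by omega)]) <;> omega
        · exfalso
          rcases hadj with ⟨_, h⟩ | ⟨_, h⟩ <;> omega
  calc (T1 m ∩ T2 m).card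
      ≤ ((Finset.range m).image f1 ∪ (Finset.range m).image f2).card :=
        Finset.card_le_card hsub
    _ ≤ ((Finset.range m).image f1).card + ((Finset.range m).image f2).card :=
        Finset.card_union_le _ _
    _ ≤ m + m := by
        gcongr <;> exact (Finset.card_image_le).trans (by simp)
    _ = 2 * m := by omega

lemma aSeq_le (m : ℕ) (hm : 2 ≤ m) : aSeq (m ^ 2) ≤ ((m : ℝ) * m - 1 - 2 * m) / 2 := by
  have hm' : (2 : ℝ) ≤ m := by exact_mod_cast hm
  have h0 : (0 : ℝ) < m := by linarith
  have h2 : (0 : ℝ) < 2 * (m : ℝ) ^ 2 := by positivity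
  rw [aSeq, show ((m ^ 2 : ℕ) : ℝ) = (m : ℝ) ^ 2 by push_cast; ring,
    Real.sqrt_sq (by positivity)]
  have h5 : 2 * (m : ℝ) ^ 2 ≤ (m : ℝ) ^ 3 := by nlinarith
  have h6 : (1 : ℝ) ≤ (m : ℝ) ^ 2 := by nlinarith
  have key : ((m : ℝ) ^ 2 - 1 - 4 * ((m : ℝ) - 1) - ((m : ℝ) * m - 1 - 2 * m) / 2)
      * (2 * (m : ℝ) ^ 2) ≤ ((m : ℝ) ^ 2 - 1) ^ 2 := by nlinarith
  rw [← le_div_iff₀ h2] at key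
  linarith

lemma aSeq_tendsto :
    Filter.Tendsto (fun n : ℕ => aSeq n / n) Filter.atTop (nhds (1 / 2)) := by
  have hA : Filter.Tendsto (fun n : ℕ => 1 / (n : ℝ)) Filter.atTop (nhds 0) :=
    tendsto_one_div_atTop_nhds_zero_nat
  have hsq : Filter.Tendsto (fun n : ℕ => Real.sqrt n) Filter.atTop Filter.atTop := by
    rw [Filter.tendsto_atTop_atTop]
    intro b
    refine ⟨Nat.ceil (b ^ 2), fun a ha => ?_⟩
    rcases le_or_gt b 0 with hb | hb
    · exact hb.trans (Real.sqrt_nonneg _)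
    · have h1 : b ^ 2 ≤ (a : ℝ) := le_trans (Nat.le_ceil _) (by exact_mod_cast ha)
      calc b = Real.sqrt (b ^ 2) := (Real.sqrt_sq hb.le).symm
        _ ≤ Real.sqrt a := Real.sqrt_le_sqrt h1
  have hB : Filter.Tendsto (fun n : ℕ => 1 / Real.sqrt n) Filter.atTop (nhds 0) := by
    exact hsq.inv_tendsto_atTop.congr (fun n => by simp [one_div])
  have t1 : Filter.Tendsto (fun n : ℕ => 1 - 1 / (n : ℝ)) Filter.atTop (nhds (1 - 0)) :=
    tendsto_const_nhds.sub hA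
  have t2 : Filter.Tendsto (fun n : ℕ => 4 * (1 / Real.sqrt n - 1 / (n : ℝ)))
      Filter.atTop (nhds (4 * (0 - 0))) := (hB.sub hA).const_mul 4
  have t3 : Filter.Tendsto (fun n : ℕ => (1 - 1 / (n : ℝ)) ^ 2 / 2)
      Filter.atTop (nhds ((1 - 0) ^ 2 / 2)) := (t1.pow 2).div_const 2
  have tot := (t1.sub t2).sub t3
  have hval : ((1 : ℝ) - 0) - 4 * (0 - 0) - (1 - 0) ^ 2 / 2 = 1 / 2 := by norm_num
  rw [hval] at tot
  refine Filter.Tendsto.congr' ?_ tot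
  filter_upwards [Filter.eventually_gt_atTop 0] with n hn
  have hn' : (0 : ℝ) < n := by exact_mod_cast hn
  have hs : 0 < Real.sqrt n := Real.sqrt_pos.2 hn'
  have hss : Real.sqrt n * Real.sqrt n = (n : ℝ) := Real.mul_self_sqrt hn'.le
  rw [aSeq,
    show (1 : ℝ) / Real.sqrt n = Real.sqrt n / n by
      rw [div_eq_div_iff hs.ne' hn'.ne']; simpa using hss.symm]
  field_simp

/-- There is a random spanning tree `𝒯` of the grid `C_m²` such that for every spanning
tree `t`, `E|𝒯 \ t| ≥ a_n` with `n = m²`; consequently for every spanning tree `t` there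
is a spanning tree `t*` with `|t* \ t| ≥ a_n`; moreover `a_n/n → 1/2`. -/
theorem grid_far_spanning_tree (m : ℕ) (hm : 2 ≤ m) :
    (∃ P : Finset (Sym2 (Fin m × Fin m)) → ℝ,
      (∀ T, 0 ≤ P T) ∧ (∑ T : Finset (Sym2 (Fin m × Fin m)), P T = 1) ∧
      (∀ T, P T ≠ 0 → IsST (grid m) T) ∧
      (∀ t, IsST (grid m) t →
        aSeq (m ^ 2) ≤ ∑ T : Finset (Sym2 (Fin m × Fin m)), P T * ((T \ t).card : ℝ))) ∧
    (∀ t, IsST (grid m) t →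
      ∃ tstar, IsST (grid m) tstar ∧ aSeq (m ^ 2) ≤ ((tstar \ t).card : ℝ)) ∧
    Filter.Tendsto (fun n : ℕ => aSeq n / n) Filter.atTop (nhds (1 / 2)) := by
  classical
  have key : ∀ t, IsST (grid m) t →
      (m * m : ℕ) ≤ (T1 m \ t).card + (T2 m \ t).card + 2 * m + 1 := by
    intro t ht
    have hcT1 : (T1 m).card + 1 = m * m := isST_card (T1_isST m hm)
    have hcT2 : (T2 m).card + 1 = m * m := isST_card (T2_isST m hm)
    have hct : t.card + 1 = m * m := isST_card ht
    have h1 : ((T1 m ∪ T2 m) \ t).card ≤ (T1 m \ t).card + (T2 m \ t).card := by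
      rw [Finset.union_sdiff_distrib]
      exact Finset.card_union_le _ _
    have h2 : (T1 m ∪ T2 m).card ≤ ((T1 m ∪ T2 m) \ t).card + t.card :=
      Finset.card_le_card_sdiff_add_card
    have h3 : (T1 m ∪ T2 m).card + (T1 m ∩ T2 m).card = (T1 m).card + (T2 m).card :=
      Finset.card_union_add_card_inter _ _
    have h4 : (T1 m ∩ T2 m).card ≤ 2 * m := inter_card m hm
    omega
  have keyR : ∀ t, IsST (grid m) t →
      aSeq (m ^ 2) ≤ (((T1 m \ t).card : ℝ) + ((T2 m \ t).card : ℝ)) / 2 := by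
    intro t ht
    refine (aSeq_le m hm).trans ?_
    have := key t ht
    have h' : ((m : ℝ) * m) ≤ ((T1 m \ t).card : ℝ) + ((T2 m \ t).card : ℝ)
        + 2 * (m : ℝ) + 1 := by exact_mod_cast this
    linarith
  refine ⟨⟨fun T => (if T = T1 m then (1 : ℝ) / 2 else 0) +
      (if T = T2 m then (1 : ℝ) / 2 else 0), ?_, ?_, ?_, ?_⟩, ?_, aSeq_tendsto⟩
  · intro T
    have : (0:ℝ) ≤ (if T = T1 m then (1 : ℝ) / 2 else 0) := by positivity
    have : (0:ℝ) ≤ (if T = T2 m then (1 : ℝ) / 2 else 0) := by positivity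
    linarith
  · rw [Finset.sum_add_distrib]
    rw [Finset.sum_ite_eq' Finset.univ (T1 m) (fun _ => (1:ℝ)/2),
      Finset.sum_ite_eq' Finset.univ (T2 m) (fun _ => (1:ℝ)/2)]
    norm_num
  · intro T hT
    rcases eq_or_ne T (T1 m) with rfl | h1
    · exact T1_isST m hm
    rcases eq_or_ne T (T2 m) with rfl | h2
    · exact T2_isST m hm
    simp [h1, h2] at hT
  · intro t ht
    have hsum : ∑ T : Finset (Sym2 (Fin m × Fin m)),
        ((if T = T1 m then (1 : ℝ) / 2 else 0) + (if T = T2 m then (1 : ℝ) / 2 else 0))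
          * ((T \ t).card : ℝ)
        = (1:ℝ)/2 * ((T1 m \ t).card : ℝ) + (1:ℝ)/2 * ((T2 m \ t).card : ℝ) := by
      simp only [add_mul, ite_mul, zero_mul]
      rw [Finset.sum_add_distrib,
        Finset.sum_ite_eq' Finset.univ (T1 m) (fun T => (1:ℝ)/2 * ((T \ t).card : ℝ)),
        Finset.sum_ite_eq' Finset.univ (T2 m) (fun T => (1:ℝ)/2 * ((T \ t).card : ℝ))]
      simp
    rw [hsum]
    have := keyR t ht
    linarith
  · intro t ht
    have h := keyR t ht
    rcases le_total ((T1 m \ t).card : ℝ) ((T2 m \ t).card : ℝ) with hle | hle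
    · exact ⟨T2 m, T2_isST m hm, by linarith⟩
    · exact ⟨T1 m, T1_isST m hm, by linarith⟩
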